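/- arXiv:1707.00359 — 2 statements merged into one kernel-verified Lean document; each statement's English description precedes it below -/
import Mathlib

section
/- For every d and m there exists a finite set of graphs F such that a graph G belongs to TM(d,m) if and only if no induced subgraph of G is isomorphic to a member of F. -/
/-- Length of the longest common prefix of `f` and `g` (as strings of length `d`). -/
def prefLen {d : ℕ} (f g : Fin d → ℕ) : ℕ :=
  Nat.findGreatest (fun k => ∀ i : Fin d, (i : ℕ) < k → f i = g i) d

/-- A tree-model of `m` colours and depth `d` for the graph `G`:
a rooted tree of uniform root-to-leaf distance `d` whose leaves are exactly `V(G)`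
(encoded by the injective map `f` sending each leaf to its root-to-leaf address),
a colouring of the leaves by `m` colours, and a symmetric signature `S` such that
two distinct vertices `u,v` are adjacent iff `(col u, col v, ℓ) ∈ S`, where `2ℓ`
is the tree-distance between `u` and `v` in the tree. -/
structure TreeModel {V : Type} (G : SimpleGraph V) (d m : ℕ) where
  f : V → Fin d → ℕ
  inj : Function.Injective f
  col : V → Fin m
  S : Fin m → Fin m → ℕ → Prop
  symm : ∀ i j l, S i j l → S j i l
  adj : ∀ u v : V, u ≠ v →
    (G.Adj u v ↔ S (col u) (col v) (d - prefLen (f u) (f v)))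

/-- `G ∈ TM(d,m)`. -/
def InTM (d m : ℕ) {V : Type} (G : SimpleGraph V) : Prop :=
  Nonempty (TreeModel G d m)


namespace PL

lemma prefLen_le {d : ℕ} (f g : Fin d → ℕ) : prefLen f g ≤ d :=
  Nat.findGreatest_le d

lemma prefLen_spec {d : ℕ} (f g : Fin d → ℕ) :
    ∀ i : Fin d, (i : ℕ) < prefLen f g → f i = g i := by
  classical
  exact Nat.findGreatest_spec (P := fun k => ∀ i : Fin d, (i : ℕ) < k → f i = g i)
    (Nat.zero_le d) (by intro i hi; omega)

lemma prefLen_symm {d : ℕ} (f g : Fin d → ℕ) : prefLen f g = prefLen g f := by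
  unfold prefLen
  congr 1
  ext k
  constructor <;> intro h i hi <;> exact (h i hi).symm

lemma prefLen_eq_iff {d : ℕ} (f g : Fin d → ℕ) (n : ℕ) :
    prefLen f g = n ↔ n ≤ d ∧ (∀ i : Fin d, (i : ℕ) < n → f i = g i) ∧
      (∀ h : n < d, f ⟨n, h⟩ ≠ g ⟨n, h⟩) := by
  classical
  constructor
  · rintro rfl
    refine ⟨prefLen_le f g, prefLen_spec f g, ?_⟩
    intro h hc
    have := Nat.findGreatest_is_greatest
      (P := fun k => ∀ i : Fin d, (i : ℕ) < k → f i = g i) (n := d)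
      (k := prefLen f g + 1) (Nat.lt_succ_self _) h
    apply this
    intro i hi
    rcases Nat.lt_succ_iff_lt_or_eq.1 hi with h1 | h1
    · exact prefLen_spec f g i h1
    · have : i = ⟨prefLen f g, h⟩ := Fin.ext h1
      rw [this]; exact hc
  · rintro ⟨hn, hp, hmax⟩
    have h1 : n ≤ prefLen f g := Nat.le_findGreatest hn hp
    rcases Nat.lt_or_ge n (prefLen f g) with h2 | h2
    · exfalso
      have hd : n < d := lt_of_lt_of_le h2 (prefLen_le f g)
      exact hmax hd (prefLen_spec f g ⟨n, hd⟩ h2)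
    · omega

lemma prefLen_of_head_ne {d : ℕ} (f g : Fin (d+1) → ℕ) (h : f 0 ≠ g 0) :
    prefLen f g = 0 := by
  rw [prefLen_eq_iff]
  refine ⟨Nat.zero_le _, by omega, fun _ => ?_⟩
  simpa using h

lemma prefLen_of_head_eq {d : ℕ} (f g : Fin (d+1) → ℕ) (h : f 0 = g 0) :
    prefLen f g = prefLen (Fin.tail f) (Fin.tail g) + 1 := by
  have htail := (prefLen_eq_iff (Fin.tail f) (Fin.tail g) (prefLen (Fin.tail f) (Fin.tail g))).1 rfl
  rw [prefLen_eq_iff]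
  obtain ⟨h1, h2, h3⟩ := htail
  refine ⟨by omega, ?_, ?_⟩
  · intro i hi
    rcases Fin.eq_zero_or_eq_succ i with rfl | ⟨j, rfl⟩
    · exact h
    · have : (j : ℕ) < prefLen (Fin.tail f) (Fin.tail g) := by
        simp [Fin.val_succ] at hi; omega
      exact h2 j this
  · intro hlt hc
    have hlt' : prefLen (Fin.tail f) (Fin.tail g) < d := by omega
    apply h3 hlt'
    have : (⟨prefLen (Fin.tail f) (Fin.tail g) + 1, hlt⟩ : Fin (d+1)) =
        Fin.succ ⟨prefLen (Fin.tail f) (Fin.tail g), hlt'⟩ := by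
      ext; simp
    rw [this] at hc
    exact hc

lemma prefLen_cons {d : ℕ} (a b : ℕ) (x y : Fin d → ℕ) :
    prefLen (Fin.cons a x) (Fin.cons b y) =
      if a = b then prefLen x y + 1 else 0 := by
  split_ifs with h
  · rw [prefLen_of_head_eq _ _ (by simpa using h)]
    simp [Fin.tail_cons]
  · exact prefLen_of_head_ne _ _ (by simpa using h)

lemma prefLen_lt_of_ne {d : ℕ} {f g : Fin d → ℕ} (h : f ≠ g) : prefLen f g < d := by
  rcases Nat.lt_or_ge (prefLen f g) d with h1 | h1
  · exact h1
  · exfalso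
    apply h
    funext i
    exact prefLen_spec f g i (lt_of_lt_of_le i.isLt h1)

end PL

def T (m : ℕ) : ℕ → Type
  | 0 => Option (Fin m)
  | d+1 => List (T m d)

def TV (m : ℕ) : ∀ d, T m d → Type
  | 0, none => Empty
  | 0, some _ => Unit
  | d+1, l => Σ i : Fin (List.length (α := T m d) l), TV m d (l.get i)

def Tcol (m : ℕ) : ∀ d (t : T m d), TV m d t → Fin m
  | 0, some c, _ => c
  | d+1, l, ⟨i, v⟩ => Tcol m d (l.get i) v

def Taddr (m : ℕ) : ∀ d (t : T m d), TV m d t → Fin d → ℕ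
  | 0, _, _ => fun i => i.elim0
  | d+1, l, ⟨i, v⟩ => Fin.cons (i : ℕ) (Taddr m d (l.get i) v)

lemma Taddr_inj (m : ℕ) : ∀ d (t : T m d), Function.Injective (Taddr m d t)
  | 0, none => fun u => u.elim
  | 0, some _ => fun u v _ => by cases u; cases v; rfl
  | d+1, l => by
    rintro ⟨i, u⟩ ⟨j, v⟩ h
    simp only [Taddr] at h
    have h0 := congrFun h 0
    simp only [Fin.cons_zero] at h0
    have hij : i = j := Fin.ext h0
    subst hij
    have ht : Taddr m d (l.get i) u = Taddr m d (l.get i) v := by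
      funext k
      have := congrFun h k.succ
      simpa [Fin.cons_succ] using this
    rw [Taddr_inj m d (l.get i) ht]

open PL

/-- The graph of a term, for a signature `S` (symmetrized). -/
def TG (m d : ℕ) (S : Fin m → Fin m → ℕ → Prop) (t : T m d) : SimpleGraph (TV m d t) where
  Adj u v := u ≠ v ∧
    (S (Tcol m d t u) (Tcol m d t v) (d - prefLen (Taddr m d t u) (Taddr m d t v)) ∨
     S (Tcol m d t v) (Tcol m d t u) (d - prefLen (Taddr m d t u) (Taddr m d t v)))
  symm := by
    constructor
    rintro u v ⟨h1, h2⟩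
    refine ⟨Ne.symm h1, ?_⟩
    rw [prefLen_symm]
    tauto
  loopless := by constructor; rintro u ⟨h1, -⟩; exact h1 rfl

lemma TG_congr (m d : ℕ) (S S' : Fin m → Fin m → ℕ → Prop)
    (h : ∀ a b l, l ≤ d → (S a b l ↔ S' a b l)) (t : T m d) :
    TG m d S t = TG m d S' t := by
  ext u v
  simp only [TG]
  have hl : d - prefLen (Taddr m d t u) (Taddr m d t v) ≤ d := Nat.sub_le _ _
  rw [h _ _ _ hl, h _ _ _ hl]

/-- The embedding order on terms. -/
def Tle (m : ℕ) : ∀ d, T m d → T m d → Prop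
  | 0, a, b => a = none ∨ a = b
  | d+1, l₁, l₂ => List.SublistForall₂ (Tle m d) l₁ l₂

lemma Tle_refl (m : ℕ) : ∀ d (t : T m d), Tle m d t t
  | 0, t => Or.inr rfl
  | d+1, l => by
    have : IsRefl (T m d) (Tle m d) := ⟨Tle_refl m d⟩
    exact refl_of (List.SublistForall₂ (Tle m d)) l

lemma Tle_trans (m : ℕ) : ∀ d (a b c : T m d), Tle m d a b → Tle m d b c → Tle m d a c
  | 0, a, b, c => by rintro (rfl | rfl) (rfl | rfl) <;> simp [Tle] <;> exact Or.inl rfl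
  | d+1, a, b, c => by
    have : IsTrans (T m d) (Tle m d) := ⟨Tle_trans m d⟩
    exact fun h1 h2 => trans_of (List.SublistForall₂ (Tle m d)) h1 h2

instance Tle_isRefl (m d : ℕ) : IsRefl (T m d) (Tle m d) := ⟨Tle_refl m d⟩
instance Tle_isTrans (m d : ℕ) : IsTrans (T m d) (Tle m d) := ⟨fun _ _ _ => Tle_trans m d _ _ _⟩

lemma T0_finite (m : ℕ) : Finite (T m 0) := by
  show Finite (Option (Fin m)); infer_instance

lemma Tpwo (m : ℕ) : ∀ d, (Set.univ : Set (T m d)).PartiallyWellOrderedOn (Tle m d)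
  | 0 => by
    rw [Set.partiallyWellOrderedOn_iff_exists_lt]
    intro f _
    have : Finite (T m 0) := T0_finite m
    obtain ⟨i, j, hne, heq⟩ := Finite.exists_ne_map_eq_of_infinite f
    rcases Nat.lt_or_ge i j with h | h
    · exact ⟨i, j, h, Or.inr heq⟩
    · exact ⟨j, i, lt_of_le_of_ne h (Ne.symm hne), Or.inr heq.symm⟩
  | d+1 => by
    haveI : IsPreorder (T m d) (Tle m d) :=
      { refl := Tle_refl m d, trans := fun _ _ _ => Tle_trans m d _ _ _ }
    have h := Set.PartiallyWellOrderedOn.partiallyWellOrderedOn_sublistForall₂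
      (Tle m d) (Tpwo m d)
    exact h.mono (by intro x _; simp)

lemma Tmono (m : ℕ) : ∀ d (t₁ t₂ : T m d), Tle m d t₁ t₂ →
    ∃ e : TV m d t₁ ↪ TV m d t₂,
      (∀ u, Tcol m d t₂ (e u) = Tcol m d t₁ u) ∧
      (∀ u v, d - prefLen (Taddr m d t₂ (e u)) (Taddr m d t₂ (e v)) =
              d - prefLen (Taddr m d t₁ u) (Taddr m d t₁ v))
  | 0, t₁, t₂ => by
    rintro (rfl | rfl)
    · have he : IsEmpty (TV m 0 none) := ⟨fun x => x.elim⟩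
      refine ⟨⟨fun x => isEmptyElim x, fun x => isEmptyElim x⟩, fun u => isEmptyElim u,
        fun u => isEmptyElim u⟩
    · exact ⟨Function.Embedding.refl _, fun _ => rfl, fun _ _ => rfl⟩
  | d+1, l₁, l₂ => by
    intro h
    have h' : List.SublistForall₂ (Tle m d) l₁ l₂ := h
    obtain ⟨l, hf, hsub⟩ := List.sublistForall₂_iff.1 h'
    obtain ⟨σ', hσ'⟩ := List.sublist_iff_exists_fin_orderEmbedding_get_eq.1 hsub
    obtain ⟨hlen, hget⟩ := List.forall₂_iff_get.1 hf
    set n₁ := List.length (α := T m d) l₁ with hn₁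
    let σ : Fin n₁ → Fin (List.length (α := T m d) l₂) := fun i => σ' (Fin.cast hlen i)
    have hσinj : Function.Injective σ := fun i j hij => by
      have h2 := σ'.injective hij
      have h3 : (i : ℕ) = (j : ℕ) := by simpa using congrArg Fin.val h2
      exact Fin.ext h3
    have hle : ∀ i : Fin n₁, Tle m d (l₁.get i) (l₂.get (σ i)) := by
      intro i
      have h1 := hget i.val i.isLt (by omega)
      have h2 := hσ' (Fin.cast hlen i)
      simp only [σ]
      rw [← h2]
      convert h1 using 2
      exact Fin.ext rfl
    have H : ∀ i : Fin n₁, ∃ e : TV m d (l₁.get i) ↪ TV m d (l₂.get (σ i)),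
        (∀ u, Tcol m d (l₂.get (σ i)) (e u) = Tcol m d (l₁.get i) u) ∧
        (∀ u v, d - prefLen (Taddr m d (l₂.get (σ i)) (e u)) (Taddr m d (l₂.get (σ i)) (e v)) =
                d - prefLen (Taddr m d (l₁.get i) u) (Taddr m d (l₁.get i) v)) :=
      fun i => Tmono m d _ _ (hle i)
    choose E hcol hlev using H
    refine ⟨⟨fun x => ⟨σ x.1, E x.1 x.2⟩, ?_⟩, ?_, ?_⟩
    · rintro ⟨i, u⟩ ⟨j, v⟩ hx
      have h1 : σ i = σ j := congrArg Sigma.fst hx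
      have hij : i = j := hσinj h1
      subst hij
      have hx' : (⟨σ i, E i u⟩ : Σ j, TV m d (l₂.get j)) = ⟨σ i, E i v⟩ := hx
      have h2 : HEq (E i u) (E i v) := (Sigma.mk.inj_iff.1 hx').2
      rw [(E i).injective (eq_of_heq h2)]
    · rintro ⟨i, u⟩
      exact hcol i u
    · rintro ⟨i, u⟩ ⟨j, v⟩
      by_cases hij : i = j
      · subst hij
        show (d+1) - prefLen (Fin.cons (σ i : ℕ) (Taddr m d (l₂.get (σ i)) (E i u)))
              (Fin.cons (σ i : ℕ) (Taddr m d (l₂.get (σ i)) (E i v))) =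
             (d+1) - prefLen (Fin.cons (i : ℕ) (Taddr m d (l₁.get i) u))
              (Fin.cons (i : ℕ) (Taddr m d (l₁.get i) v))
        rw [prefLen_cons, prefLen_cons, if_pos rfl, if_pos rfl,
          Nat.succ_sub_succ, Nat.succ_sub_succ]
        exact hlev i u v
      · have hσij : (σ i : ℕ) ≠ (σ j : ℕ) := by
          intro hc
          exact hij (hσinj (Fin.ext hc))
      
        show (d+1) - prefLen (Fin.cons (σ i : ℕ) (Taddr m d (l₂.get (σ i)) (E i u)))
              (Fin.cons (σ j : ℕ) (Taddr m d (l₂.get (σ j)) (E j v))) =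
             (d+1) - prefLen (Fin.cons (i : ℕ) (Taddr m d (l₁.get i) u))
              (Fin.cons (j : ℕ) (Taddr m d (l₁.get j) v))
        rw [prefLen_cons, prefLen_cons, if_neg hσij,
          if_neg (fun hc => hij (Fin.ext hc))]

lemma Tcomplete (m : ℕ) : ∀ (d : ℕ) (V : Type) [Fintype V] (f : V → Fin d → ℕ),
    Function.Injective f → ∀ col : V → Fin m,
    ∃ (t : T m d) (φ : V ≃ TV m d t),
      (∀ v, Tcol m d t (φ v) = col v) ∧
      (∀ u v : V, prefLen (Taddr m d t (φ u)) (Taddr m d t (φ v)) = prefLen (f u) (f v)) := by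
  intro d
  induction d with
  | zero =>
    intro V _ f hf col
    have hsub : Subsingleton V := ⟨fun a b => hf (funext fun i => i.elim0)⟩
    rcases isEmpty_or_nonempty V with hV | hV
    · have he : IsEmpty (TV m 0 none) := ⟨fun x => x.elim⟩
      exact ⟨none, Equiv.equivOfIsEmpty V (TV m 0 none), fun v => isEmptyElim v,
        fun u v => isEmptyElim u⟩
    · obtain ⟨v₀⟩ := hV
      have hu : ∀ x y : TV m 0 (some (col v₀)), x = y := fun x y => by cases x; cases y; rfl
      refine ⟨some (col v₀), ⟨fun _ => (), fun _ => v₀, fun v => Subsingleton.elim _ _,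
        fun u => hu _ _⟩, fun v => ?_, fun u v => ?_⟩
      · show col v₀ = col v
        exact congrArg col (Subsingleton.elim v₀ v)
      · have key : ∀ x y x' y' : Fin 0 → ℕ, prefLen x y = prefLen x' y' := by
          intro x y x' y'
          have := prefLen_le x y
          have := prefLen_le x' y'
          omega
        exact key _ _ _ _
  | succ d IH =>
    suffices H : ∀ (n : ℕ) (V : Type) [Fintype V] (f : V → Fin (d+1) → ℕ),
        Function.Injective f → ∀ col : V → Fin m, Fintype.card V = n →
        ∃ (t : T m (d+1)) (φ : V ≃ TV m (d+1) t),
          (∀ v, Tcol m (d+1) t (φ v) = col v) ∧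
          (∀ u v : V, prefLen (Taddr m (d+1) t (φ u)) (Taddr m (d+1) t (φ v)) =
            prefLen (f u) (f v)) by
      intro V _ f hf col
      exact H (Fintype.card V) V f hf col rfl
    intro n
    induction n using Nat.strong_induction_on with
    | _ n ihn =>
    intro V _ f hf col hcard
    rcases isEmpty_or_nonempty V with hV | hV
    · have he : IsEmpty (TV m (d+1) (List.nil (α := T m d))) := ⟨fun x => x.1.elim0⟩
      exact ⟨List.nil (α := T m d), Equiv.equivOfIsEmpty V _, fun v => isEmptyElim v,
        fun u v => isEmptyElim u⟩
    · obtain ⟨v₀⟩ := hV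
      set k₀ := f v₀ 0 with hk₀
      -- part 1 : the fibre of k₀;  part 2 : the rest
      have hf₁ : Function.Injective
          (fun v : {v : V // f v 0 = k₀} => Fin.tail (f v.1)) := by
        rintro ⟨a, ha⟩ ⟨b, hb⟩ hab
        have : f a = f b := by
          funext i
          rcases Fin.eq_zero_or_eq_succ i with rfl | ⟨j, rfl⟩
          · rw [ha, hb]
          · exact congrFun hab j
        exact Subtype.ext (hf this)
      obtain ⟨t₁, φ₁, hc₁, hp₁⟩ := IH {v : V // f v 0 = k₀}
        (fun v => Fin.tail (f v.1)) hf₁ (fun v => col v.1)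
      have hf₂ : Function.Injective (fun v : {v : V // f v 0 ≠ k₀} => f v.1) := by
        rintro ⟨a, ha⟩ ⟨b, hb⟩ hab
        exact Subtype.ext (hf hab)
      have hcard₂ : Fintype.card {v : V // f v 0 ≠ k₀} < n := by
        rw [← hcard]
        exact Fintype.card_subtype_lt (x := v₀) (by simp [hk₀])
      obtain ⟨t₂, φ₂, hc₂, hp₂⟩ := ihn _ hcard₂ {v : V // f v 0 ≠ k₀}
        (fun v => f v.1) hf₂ (fun v => col v.1) rfl
      -- assemble
      refine ⟨List.cons t₁ t₂, ?_⟩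
      set t : T m (d+1) := List.cons t₁ t₂ with ht
      have hlen : List.length (α := T m d) t = List.length (α := T m d) t₂ + 1 := rfl
      let F : V → TV m (d+1) t := fun v =>
        if h : f v 0 = k₀ then ⟨⟨0, by omega⟩, φ₁ ⟨v, h⟩⟩
        else ⟨((φ₂ ⟨v, h⟩).1).succ, (φ₂ ⟨v, h⟩).2⟩
      have Fpos : ∀ v (h : f v 0 = k₀), F v = ⟨⟨0, by omega⟩, φ₁ ⟨v, h⟩⟩ :=
        fun v h => dif_pos h
      have Fneg : ∀ v (h : ¬ f v 0 = k₀), F v = ⟨((φ₂ ⟨v, h⟩).1).succ, (φ₂ ⟨v, h⟩).2⟩ :=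
        fun v h => dif_neg h
      have hFinj : Function.Injective F := by
        intro a b hab
        by_cases ha : f a 0 = k₀ <;> by_cases hb : f b 0 = k₀
        · rw [Fpos a ha, Fpos b hb] at hab
          have h2 := (Sigma.mk.inj_iff.1 hab).2
          have := φ₁.injective (eq_of_heq h2)
          exact congrArg Subtype.val this
        · rw [Fpos a ha, Fneg b hb] at hab
          have h1 := (Sigma.mk.inj_iff.1 hab).1
          have := congrArg Fin.val h1
          simp [Fin.val_succ] at this
        · rw [Fneg a ha, Fpos b hb] at hab
          have h1 := (Sigma.mk.inj_iff.1 hab).1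
          have := congrArg Fin.val h1
          simp [Fin.val_succ] at this
        · rw [Fneg a ha, Fneg b hb] at hab
          obtain ⟨h1, h2⟩ := Sigma.mk.inj_iff.1 hab
          have hfst : (φ₂ ⟨a, ha⟩).1 = (φ₂ ⟨b, hb⟩).1 := by
            apply Fin.succ_injective
            exact h1
          have : φ₂ ⟨a, ha⟩ = φ₂ ⟨b, hb⟩ := Sigma.ext hfst h2
          exact congrArg Subtype.val (φ₂.injective this)
      have hFsurj : Function.Surjective F := by
        rintro ⟨⟨ival, hival⟩, w⟩
        cases ival with
        | zero =>
          refine ⟨(φ₁.symm w).1, ?_⟩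
          have h : f (φ₁.symm w).1 0 = k₀ := (φ₁.symm w).2
          rw [Fpos _ h]
          have hφ : φ₁ ⟨(φ₁.symm w).1, h⟩ = w := by
            have : (⟨(φ₁.symm w).1, h⟩ : {v : V // f v 0 = k₀}) = φ₁.symm w :=
              Subtype.ext rfl
            rw [this, Equiv.apply_symm_apply]
          rw [hφ]
        | succ j =>
          have hj : j < List.length (α := T m d) t₂ := by omega
          refine ⟨(φ₂.symm ⟨⟨j, hj⟩, w⟩).1, ?_⟩
          have h : f (φ₂.symm ⟨⟨j, hj⟩, w⟩).1 0 ≠ k₀ := (φ₂.symm ⟨⟨j, hj⟩, w⟩).2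
          rw [Fneg _ h]
          have hφ : φ₂ ⟨(φ₂.symm ⟨⟨j, hj⟩, w⟩).1, h⟩ = ⟨⟨j, hj⟩, w⟩ := by
            have : (⟨(φ₂.symm ⟨⟨j, hj⟩, w⟩).1, h⟩ : {v : V // f v 0 ≠ k₀}) =
                φ₂.symm ⟨⟨j, hj⟩, w⟩ := Subtype.ext rfl
            rw [this]; exact φ₂.apply_symm_apply _
          rw [hφ]
          exact Sigma.ext (Fin.ext rfl) HEq.rfl
      refine ⟨Equiv.ofBijective F ⟨hFinj, hFsurj⟩, ?_, ?_⟩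
      · intro v
        show Tcol m (d+1) t (F v) = col v
        by_cases h : f v 0 = k₀
        · rw [Fpos v h]
          exact hc₁ ⟨v, h⟩
        · rw [Fneg v h]
          rcases hx : φ₂ ⟨v, h⟩ with ⟨i, w⟩
          have := hc₂ ⟨v, h⟩
          rw [hx] at this
          exact this
      · intro u v
        show prefLen (Taddr m (d+1) t (F u)) (Taddr m (d+1) t (F v)) = prefLen (f u) (f v)
        by_cases hu : f u 0 = k₀ <;> by_cases hv : f v 0 = k₀
        · rw [Fpos u hu, Fpos v hv]
          show prefLen (Fin.cons 0 (Taddr m d t₁ (φ₁ ⟨u, hu⟩)))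
              (Fin.cons 0 (Taddr m d t₁ (φ₁ ⟨v, hv⟩))) = _
          rw [prefLen_cons, if_pos rfl, hp₁ ⟨u, hu⟩ ⟨v, hv⟩,
            prefLen_of_head_eq (f u) (f v) (by rw [hu, hv])]
        · rw [Fpos u hu, Fneg v hv]
          rcases hx : φ₂ ⟨v, hv⟩ with ⟨i, w⟩
          show prefLen (Fin.cons 0 (Taddr m d t₁ (φ₁ ⟨u, hu⟩)))
              (Fin.cons ((i : ℕ) + 1) (Taddr m d (t₂.get i) w)) = _
          rw [prefLen_cons, if_neg (by omega),
            prefLen_of_head_ne (f u) (f v) (by rw [hu]; exact fun hc => hv hc.symm)]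
        · rw [Fneg u hu, Fpos v hv]
          rcases hx : φ₂ ⟨u, hu⟩ with ⟨i, w⟩
          show prefLen (Fin.cons ((i : ℕ) + 1) (Taddr m d (t₂.get i) w))
              (Fin.cons 0 (Taddr m d t₁ (φ₁ ⟨v, hv⟩))) = _
          rw [prefLen_cons, if_neg (by omega),
            prefLen_of_head_ne (f u) (f v) (by rw [hv]; exact fun hc => hu hc)]
        · rw [Fneg u hu, Fneg v hv]
          rcases hx : φ₂ ⟨u, hu⟩ with ⟨iu, wu⟩
          rcases hy : φ₂ ⟨v, hv⟩ with ⟨iv, wv⟩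
          have h2 := hp₂ ⟨u, hu⟩ ⟨v, hv⟩
          rw [hx, hy] at h2
          show prefLen (Fin.cons ((iu : ℕ) + 1) (Taddr m d (t₂.get iu) wu))
              (Fin.cons ((iv : ℕ) + 1) (Taddr m d (t₂.get iv) wv)) = _
          have h3 : prefLen (Taddr m (d+1) t₂ ⟨iu, wu⟩) (Taddr m (d+1) t₂ ⟨iv, wv⟩) =
              prefLen (Fin.cons ((iu : ℕ)) (Taddr m d (t₂.get iu) wu))
                (Fin.cons ((iv : ℕ)) (Taddr m d (t₂.get iv) wv)) := rfl
          rw [h3] at h2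
          rw [prefLen_cons] at h2 ⊢
          by_cases hij : (iu : ℕ) = (iv : ℕ)
          · rw [if_pos (by omega)]
            rw [if_pos hij] at h2
            exact h2
          · rw [if_neg (by omega)]
            rw [if_neg hij] at h2
            exact h2

@[simp] lemma TG_adj (m d : ℕ) (S : Fin m → Fin m → ℕ → Prop) (t : T m d)
    (u v : TV m d t) : (TG m d S t).Adj u v ↔ u ≠ v ∧
    (S (Tcol m d t u) (Tcol m d t v) (d - prefLen (Taddr m d t u) (Taddr m d t v)) ∨
     S (Tcol m d t v) (Tcol m d t u) (d - prefLen (Taddr m d t u) (Taddr m d t v))) :=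
  Iff.rfl

lemma inTM_of_embedding {d m : ℕ} {U V : Type} {H : SimpleGraph U} {G : SimpleGraph V}
    (e : H ↪g G) (h : InTM d m G) : InTM d m H := by
  obtain ⟨M⟩ := h
  refine ⟨⟨fun v => M.f (e v), M.inj.comp e.injective, fun v => M.col (e v), M.S, M.symm, ?_⟩⟩
  intro u v huv
  rw [← e.map_adj_iff]
  exact M.adj (e u) (e v) (fun hc => huv (e.injective hc))

lemma model_to_term {V : Type} [Fintype V] {G : SimpleGraph V} {d m : ℕ} (M : TreeModel G d m) :
    ∃ t : T m d, Nonempty (G ≃g TG m d M.S t) := by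
  obtain ⟨t, φ, hcol, hpref⟩ := Tcomplete m d V M.f M.inj M.col
  refine ⟨t, ⟨⟨φ, ?_⟩⟩⟩
  intro u v
  simp only [TG_adj]
  by_cases huv : u = v
  · subst huv
    simp
  · rw [hcol u, hcol v, hpref u v]
    constructor
    · rintro ⟨-, h | h⟩
      · exact (M.adj u v huv).2 h
      · exact (M.adj u v huv).2 (M.symm _ _ _ h)
    · intro h
      exact ⟨fun hc => huv (φ.injective hc), Or.inl ((M.adj u v huv).1 h)⟩

lemma TM_pwo (D M : ℕ) :
    {x : Σ n, SimpleGraph (Fin n) | InTM D M x.2}.PartiallyWellOrderedOn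
      (fun x y => Nonempty (x.2 ↪g y.2)) := by
  classical
  rw [Set.partiallyWellOrderedOn_iff_exists_lt]
  intro A hA
  have Mdl : ∀ n, TreeModel (A n).2 D M := fun n => Classical.choice (hA n)
  let code : ℕ → (Fin M → Fin M → Fin (D+1) → Bool) := fun n a b l =>
    decide ((Mdl n).S a b (l : ℕ))
  have hfin : (Set.univ : Set (Fin M → Fin M → Fin (D+1) → Bool)).PartiallyWellOrderedOn
      (· = ·) := by
    rw [Set.partiallyWellOrderedOn_iff_exists_lt]
    intro g _
    obtain ⟨i, j, hne, heq⟩ := Finite.exists_ne_map_eq_of_infinite g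
    rcases Nat.lt_or_ge i j with h | h
    · exact ⟨i, j, h, heq⟩
    · exact ⟨j, i, lt_of_le_of_ne h (Ne.symm hne), heq.symm⟩
  haveI : IsTrans (Fin M → Fin M → Fin (D+1) → Bool) (· = ·) := ⟨fun _ _ _ => Eq.trans⟩
  obtain ⟨g, hg⟩ := hfin.exists_monotone_subseq (f := code) (fun _ => Set.mem_univ _)
  have ht : ∀ n, ∃ t : T M D, Nonempty ((A n).2 ≃g TG M D (Mdl n).S t) :=
    fun n => model_to_term (Mdl n)
  choose tf hiso using ht
  obtain ⟨i, j, hij, hle⟩ := Set.partiallyWellOrderedOn_iff_exists_lt.1 (Tpwo M D) (fun k => tf (g k)) (fun _ => Set.mem_univ _)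
  refine ⟨g i, g j, g.strictMono hij, ?_⟩
  obtain ⟨e, hcol, hlev⟩ := Tmono M D _ _ hle
  -- embedding between term graphs with the signature of `g i`
  let E : TG M D (Mdl (g i)).S (tf (g i)) ↪g TG M D (Mdl (g i)).S (tf (g j)) := by
    refine ⟨e, ?_⟩
    intro a b
    simp only [TG_adj]
    rw [hcol a, hcol b, hlev a b]
    constructor
    · rintro ⟨hne, hs⟩
      exact ⟨fun hc => hne (congrArg e hc), hs⟩
    · rintro ⟨hne, hs⟩
      exact ⟨fun hc => hne (e.injective hc), hs⟩
  have hSeq : TG M D (Mdl (g i)).S (tf (g j)) = TG M D (Mdl (g j)).S (tf (g j)) := by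
    apply TG_congr
    intro a b l hl
    have hc := hg i j (le_of_lt hij)
    have := congrFun (congrFun (congrFun hc a) b) (⟨l, by omega⟩ : Fin (D+1))
    simpa [code] using decide_eq_decide.mp this
  rw [hSeq] at E
  exact ⟨((hiso (g j)).some.symm.toEmbedding.comp E).comp (hiso (g i)).some.toEmbedding⟩

lemma exists_finite_basis {α : Type} (s : Set α) (r : α → α → Prop)
    (h : s.PartiallyWellOrderedOn r) :
    ∃ F : Finset α, ↑F ⊆ s ∧ ∀ x ∈ s, ∃ y ∈ F, r y x := by
  classical
  by_contra hcon
  push_neg at hcon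
  have key : ∀ F : Finset α, ↑F ⊆ s → ∃ x, x ∈ s ∧ ∀ y ∈ F, ¬ r y x := by
    intro F hF
    obtain ⟨x, hx, hx2⟩ := hcon F hF
    exact ⟨x, hx, hx2⟩
  let step : {F : Finset α // ↑F ⊆ s} → {F : Finset α // ↑F ⊆ s} := fun F =>
    ⟨insert (Classical.choose (key F.1 F.2)) F.1, by
      rw [Finset.coe_insert]
      exact Set.insert_subset (Classical.choose_spec (key F.1 F.2)).1 F.2⟩
  let Fs : ℕ → {F : Finset α // ↑F ⊆ s} := fun n => step^[n] ⟨∅, by simp⟩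
  let u : ℕ → α := fun n => Classical.choose (key (Fs n).1 (Fs n).2)
  have hFs_succ : ∀ n, (Fs (n+1)).1 = insert (u n) (Fs n).1 := by
    intro n
    show (step^[n+1] _).1 = _
    rw [Function.iterate_succ_apply']
  have hsub : ∀ n k : ℕ, n ≤ k → (Fs n).1 ⊆ (Fs k).1 := by
    intro n k hnk
    induction hnk with
    | refl => exact subset_rfl
    | step _ ih =>
      rename_i k' _
      refine ih.trans ?_
      rw [hFs_succ k']
      exact Finset.subset_insert _ _
  have hmem : ∀ i n : ℕ, i < n → u i ∈ (Fs n).1 := by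
    intro i n hin
    have h1 : u i ∈ (Fs (i+1)).1 := by
      rw [hFs_succ i]; exact Finset.mem_insert_self _ _
    exact hsub (i+1) n hin h1
  have hu_s : ∀ n, u n ∈ s := fun n => (Classical.choose_spec (key (Fs n).1 (Fs n).2)).1
  obtain ⟨i, j, hij, hr⟩ := Set.partiallyWellOrderedOn_iff_exists_lt.1 h u hu_s
  exact (Classical.choose_spec (key (Fs j).1 (Fs j).2)).2 (u i) (hmem i j hij) hr

def Obst (d m : ℕ) : Set (Σ n, SimpleGraph (Fin n)) :=
  {x | ¬ InTM d m x.2 ∧ ∀ (k : ℕ) (H : SimpleGraph (Fin k)), k < x.1 →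
    Nonempty (H ↪g x.2) → InTM d m H}

lemma obst_reach (d m : ℕ) : ∀ (n : ℕ) (G : SimpleGraph (Fin n)), ¬ InTM d m G →
    ∃ x ∈ Obst d m, Nonempty (x.2 ↪g G) := by
  intro n
  induction n using Nat.strong_induction_on with
  | _ n ihn =>
  intro G hG
  by_cases h : (⟨n, G⟩ : Σ n, SimpleGraph (Fin n)) ∈ Obst d m
  · exact ⟨⟨n, G⟩, h, ⟨SimpleGraph.Embedding.refl⟩⟩
  · simp only [Obst, Set.mem_setOf_eq, not_and] at h
    have h2 := h hG
    push_neg at h2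
    obtain ⟨k, H, hk, hemb, hH⟩ := h2
    obtain ⟨y, hy, ⟨ey⟩⟩ := ihn k hk H hH
    exact ⟨y, hy, ⟨hemb.some.comp ey⟩⟩

lemma inTM_empty (d m : ℕ) {V : Type} [IsEmpty V] (G : SimpleGraph V) : InTM d m G :=
  ⟨⟨fun v => isEmptyElim v, fun v => isEmptyElim v, fun v => isEmptyElim v,
    fun _ _ _ => False, fun _ _ _ h => h, fun u => isEmptyElim u⟩⟩

lemma inTM_extend {d m n : ℕ} (H : SimpleGraph (Fin (n+1)))
    (h : InTM (d+1) m (H.comap (Fin.castSucc : Fin n → Fin (n+1)))) :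
    InTM (d+1) (2*m+1) H := by
  classical
  obtain ⟨M⟩ := h
  set N : ℕ := (Finset.univ.sup fun u : Fin n => M.f u 0) + 1 with hN
  have hNlt : ∀ u : Fin n, M.f u 0 < N := fun u =>
    Nat.lt_succ_of_le (Finset.le_sup (f := fun u : Fin n => M.f u 0) (Finset.mem_univ u))
  let enc : Fin m → Bool → Fin (2*m+1) := fun c e =>
    ⟨c.1 + (if e then m else 0), by have := c.2; split <;> omega⟩
  let spec : Fin (2*m+1) := ⟨2*m, by omega⟩
  have encval : ∀ c e, (enc c e).1 = c.1 + (if e then m else 0) := fun c e => rfl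
  have hspecval : (spec : ℕ) = 2*m := rfl
  have enc_ne : ∀ c e, enc c e ≠ spec := by
    intro c e hc
    have hv := congrArg Fin.val hc
    rw [encval, hspecval] at hv
    have h2 := c.2
    split at hv <;> omega
  have enc_inj : ∀ c c' e e', enc c e = enc c' e' → c = c' ∧ e = e' := by
    intro c c' e e' hc
    have hv := congrArg Fin.val hc
    rw [encval, encval] at hv
    have h2 := c.2; have h3 := c'.2
    cases e <;> cases e' <;> simp at hv
    · exact ⟨Fin.ext (by omega), rfl⟩
    · exact absurd hv (by omega)
    · exact absurd hv (by omega)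
    · exact ⟨Fin.ext (by omega), rfl⟩
  let ebit : Fin n → Bool := fun u => decide (H.Adj (Fin.castSucc u) (Fin.last n))
  let f' : Fin (n+1) → Fin (d+1) → ℕ := Fin.lastCases (fun _ => N) M.f
  let col' : Fin (n+1) → Fin (2*m+1) :=
    Fin.lastCases spec (fun u => enc (M.col u) (ebit u))
  let S' : Fin (2*m+1) → Fin (2*m+1) → ℕ → Prop := fun a b l =>
    (∃ (a₀ b₀ : Fin m) (ea eb : Bool), a = enc a₀ ea ∧ b = enc b₀ eb ∧ M.S a₀ b₀ l) ∨
    (a = spec ∧ l = d+1 ∧ ∃ b₀, b = enc b₀ true) ∨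
    (b = spec ∧ l = d+1 ∧ ∃ a₀, a = enc a₀ true)
  have hf'last : f' (Fin.last n) = fun _ => N := Fin.lastCases_last
  have hf'cast : ∀ u : Fin n, f' (Fin.castSucc u) = M.f u := fun u => Fin.lastCases_castSucc u
  have hc'last : col' (Fin.last n) = spec := Fin.lastCases_last
  have hc'cast : ∀ u : Fin n, col' (Fin.castSucc u) = enc (M.col u) (ebit u) :=
    fun u => Fin.lastCases_castSucc u
  have hS'enc : ∀ a b ea eb l, S' (enc a ea) (enc b eb) l ↔ M.S a b l := by
    intro a b ea eb l
    constructor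
    · rintro (⟨a₀, b₀, ea₀, eb₀, ha, hb, hs⟩ | ⟨hsp, -⟩ | ⟨hsp, -⟩)
      · obtain ⟨rfl, -⟩ := enc_inj _ _ _ _ ha
        obtain ⟨rfl, -⟩ := enc_inj _ _ _ _ hb
        exact hs
      · exact absurd hsp (enc_ne a ea)
      · exact absurd hsp (enc_ne b eb)
    · intro hs
      exact Or.inl ⟨a, b, ea, eb, rfl, rfl, hs⟩
  refine ⟨⟨f', ?_, col', S', ?_, ?_⟩⟩
  · -- injectivity
    intro u v huv
    induction u using Fin.lastCases with
    | last =>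
      induction v using Fin.lastCases with
      | last => rfl
      | cast v' =>
        rw [hf'last, hf'cast] at huv
        have h0 : N = M.f v' 0 := congrFun huv 0
        have := hNlt v'
        omega
    | cast u' =>
      induction v using Fin.lastCases with
      | last =>
        rw [hf'last, hf'cast] at huv
        have h0 : M.f u' 0 = N := congrFun huv 0
        have := hNlt u'
        omega
      | cast v' =>
        rw [hf'cast, hf'cast] at huv
        rw [M.inj huv]
  · -- symmetry of S'
    rintro a b l (⟨a₀, b₀, ea, eb, ha, hb, hs⟩ | ⟨h1, h2, h3⟩ | ⟨h1, h2, h3⟩)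
    · exact Or.inl ⟨b₀, a₀, eb, ea, hb, ha, M.symm _ _ _ hs⟩
    · exact Or.inr (Or.inr ⟨h1, h2, h3⟩)
    · exact Or.inr (Or.inl ⟨h1, h2, h3⟩)
  · -- adjacency
    intro u v huv
    induction u using Fin.lastCases with
    | last =>
      induction v using Fin.lastCases with
      | last => exact absurd rfl huv
      | cast v' =>
        rw [hf'last, hf'cast, hc'last, hc'cast]
        have hhead : (fun _ : Fin (d+1) => N) 0 ≠ M.f v' 0 := by
          show N ≠ M.f v' 0
          have := hNlt v'; omega
        rw [prefLen_of_head_ne _ _ hhead, Nat.sub_zero]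
        constructor
        · intro hadj
          refine Or.inr (Or.inl ⟨rfl, rfl, M.col v', ?_⟩)
          have hb : ebit v' = true := decide_eq_true (hadj.symm)
          rw [hb]
        · rintro (⟨a₀, b₀, ea, eb, ha, -⟩ | ⟨-, -, b₀, hb⟩ | ⟨hsp, -⟩)
          · exact absurd ha.symm (enc_ne a₀ ea)
          · obtain ⟨-, hb2⟩ := enc_inj _ _ _ _ hb
            have : H.Adj (Fin.castSucc v') (Fin.last n) := of_decide_eq_true hb2
            exact this.symm
          · exact absurd hsp (enc_ne _ _)
    | cast u' =>
      induction v using Fin.lastCases with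
      | last =>
        rw [hf'last, hf'cast, hc'last, hc'cast]
        have hhead : M.f u' 0 ≠ (fun _ : Fin (d+1) => N) 0 := by
          show M.f u' 0 ≠ N
          have := hNlt u'; omega
        rw [prefLen_of_head_ne _ _ hhead, Nat.sub_zero]
        constructor
        · intro hadj
          refine Or.inr (Or.inr ⟨rfl, rfl, M.col u', ?_⟩)
          have hb : ebit u' = true := decide_eq_true hadj
          rw [hb]
        · rintro (⟨a₀, b₀, ea, eb, -, hb, -⟩ | ⟨hsp, -⟩ | ⟨-, -, a₀, ha⟩)
          · exact absurd hb.symm (enc_ne b₀ eb)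
          · exact absurd hsp (enc_ne _ _)
          · obtain ⟨-, ha2⟩ := enc_inj _ _ _ _ ha
            exact of_decide_eq_true ha2
      | cast v' =>
        have hne : u' ≠ v' := fun hc => huv (by rw [hc])
        rw [hf'cast, hf'cast, hc'cast, hc'cast, hS'enc]
        have := M.adj u' v' hne
        rw [SimpleGraph.comap_adj] at this
        exact this

lemma obst_sub (d m : ℕ) :
    Obst (d+1) m ⊆ {x : Σ n, SimpleGraph (Fin n) | InTM (d+1) (2*m+1) x.2} := by
  rintro ⟨n, G⟩ ⟨h1, h2⟩
  cases n with
  | zero => exact absurd (inTM_empty _ _ G) h1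
  | succ k =>
    have hemb : Nonempty ((G.comap (Fin.castSucc : Fin k → Fin (k+1))) ↪g G) := by
      have e := SimpleGraph.Embedding.comap (Fin.castSuccEmb : Fin k ↪ Fin (k+1)) G
      rw [Fin.coe_castSuccEmb] at e
      exact ⟨e⟩
    have := h2 k (G.comap Fin.castSucc) (Nat.lt_succ_self k) hemb
    exact inTM_extend G this

lemma inTM_zero_zero {V : Type} (G : SimpleGraph V) : InTM 0 0 G ↔ IsEmpty V := by
  constructor
  · rintro ⟨M⟩
    exact ⟨fun v => (M.col v).elim0⟩
  · intro h
    exact inTM_empty 0 0 G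

lemma inTM_zero_succ {V : Type} (m : ℕ) (G : SimpleGraph V) :
    InTM 0 (m+1) G ↔ Subsingleton V := by
  constructor
  · rintro ⟨M⟩
    exact ⟨fun a b => M.inj (funext fun i => i.elim0)⟩
  · intro h
    refine ⟨⟨fun _ i => i.elim0, fun a b _ => Subsingleton.elim a b, fun _ => 0,
      fun _ _ _ => False, fun _ _ _ h => h, ?_⟩⟩
    intro u v huv
    exact absurd (Subsingleton.elim u v) huv

/-- For every `d` and `m` there is a finite list of (finite) forbidden induced subgraphs
characterizing `TM(d,m)`: `G ∈ TM(d,m)` iff no member of the list admits an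
induced-subgraph embedding into `G`. -/
theorem stmt_17 (d m : ℕ) :
    ∃ (k : ℕ) (sz : Fin k → ℕ) (F : ∀ i : Fin k, SimpleGraph (Fin (sz i))),
      ∀ (V : Type) [Fintype V] (G : SimpleGraph V),
        InTM d m G ↔ ∀ i : Fin k, IsEmpty (F i ↪g G) := by
  classical
  cases d with
  | zero =>
    cases m with
    | zero =>
      refine ⟨1, fun _ => 1, fun _ => ⊥, ?_⟩
      intro V _ G
      rw [inTM_zero_zero]
      constructor
      · intro hV i
        exact ⟨fun e => isEmptyElim (e 0)⟩
      · intro h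
        by_contra hne
        rw [not_isEmpty_iff] at hne
        obtain ⟨v⟩ := hne
        refine (h 0).false ⟨⟨fun _ => v, fun a b _ => Subsingleton.elim a b⟩, ?_⟩
        intro a b
        exact iff_of_false (G.irrefl) (by simp)
    | succ m' =>
      refine ⟨2, fun _ => 2, fun i => if (i : ℕ) = 0 then ⊥ else ⊤, ?_⟩
      intro V _ G
      rw [inTM_zero_succ]
      constructor
      · intro hV i
        refine ⟨fun e => ?_⟩
        have h01 : (0 : Fin 2) ≠ 1 := by decide
        exact h01 (e.injective (Subsingleton.elim _ _))
      · intro h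
        by_contra hns
        obtain ⟨u, v, huv⟩ := (not_subsingleton_iff_nontrivial.mp hns).exists_pair_ne
        have einj : Function.Injective (fun a : Fin 2 => if a = 0 then u else v) := by
          intro a b hab
          fin_cases a <;> fin_cases b <;> simp at hab ⊢ <;>
            first
              | rfl
              | exact absurd hab huv
              | exact absurd hab.symm huv
        by_cases hA : G.Adj u v
        · have hF : (if ((1 : Fin 2) : ℕ) = 0 then (⊥ : SimpleGraph (Fin 2)) else ⊤) = ⊤ :=
            if_neg (by decide)
          refine (h 1).false ?_
          show (if ((1 : Fin 2) : ℕ) = 0 then (⊥ : SimpleGraph (Fin 2)) else ⊤) ↪g G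
          rw [hF]
          refine ⟨⟨fun a => if a = 0 then u else v, einj⟩, ?_⟩
          intro a b
          fin_cases a <;> fin_cases b <;>
            simp [hA, hA.symm, G.irrefl, huv, Ne.symm huv]
        · have hF : (if ((0 : Fin 2) : ℕ) = 0 then (⊥ : SimpleGraph (Fin 2)) else ⊤) = ⊥ :=
            if_pos rfl
          refine (h 0).false ?_
          show (if ((0 : Fin 2) : ℕ) = 0 then (⊥ : SimpleGraph (Fin 2)) else ⊤) ↪g G
          rw [hF]
          refine ⟨⟨fun a => if a = 0 then u else v, einj⟩, ?_⟩
          intro a b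
          have hA' : ¬ G.Adj v u := fun hc => hA hc.symm
          fin_cases a <;> fin_cases b <;> simp [hA, hA', G.irrefl]
  | succ d' =>
    obtain ⟨Fb, hFb_sub, hFb_basis⟩ := exists_finite_basis (Obst (d'+1) m)
      (fun x y => Nonempty (x.2 ↪g y.2))
      ((TM_pwo (d'+1) (2*m+1)).mono (obst_sub d' m))
    refine ⟨Fb.toList.length, fun i => (Fb.toList.get i).1, fun i => (Fb.toList.get i).2, ?_⟩
    intro V _ G
    constructor
    · intro hG i
      refine ⟨fun e => ?_⟩
      have hmem : Fb.toList.get i ∈ Fb := Finset.mem_toList.1 (List.get_mem _ _)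
      exact (hFb_sub hmem).1 (inTM_of_embedding e hG)
    · intro hemb
      by_contra hG
      have isoG := SimpleGraph.Iso.comap (Fintype.equivFin V).symm G
      have hG' : ¬ InTM (d'+1) m (G.comap ⇑(Fintype.equivFin V).symm.toEmbedding) := fun hc =>
        hG (inTM_of_embedding isoG.symm.toEmbedding hc)
      obtain ⟨x, hx, ⟨ex⟩⟩ := obst_reach (d'+1) m _ _ hG'
      obtain ⟨y, hyF, ⟨ey⟩⟩ := hFb_basis x hx
      obtain ⟨i, hi⟩ := List.mem_iff_get.1 (Finset.mem_toList.2 hyF)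
      refine (hemb i).false ?_
      show (Fb.toList.get i).2 ↪g G
      rw [hi]
      exact isoG.toEmbedding.comp (ex.comp ey)
end

section
/- Let T be a coloured rooted tree, X and Y vertex automorphism orbits of T, with x₁,x₂ ∈ X and y₁,y₂ ∈ Y. Let zᵢ be the least common ancestor of xᵢ and yᵢ in T. If dist(x₁,z₁) = dist(x₂,z₂) and dist(y₁,z₁) = dist(y₂,z₂), then there is a colour-preserving automorphism of T mapping (x₁,y₁) to (x₂,y₂). -/
/-- `b` is an ancestor of `a` (possibly `a` itself) in the rooted tree given by `parent`. -/
def Anc {A : Type} (parent : A → A) (b a : A) : Prop := ∃ n : ℕ, parent^[n] a = b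

/-- A colour-preserving automorphism of the coloured rooted tree `(parent, root, colour)`. -/
def IsTreeAut {A : Type} (parent : A → A) (root : A) (colour : A → ℕ) (φ : A ≃ A) : Prop :=
  φ root = root ∧ (∀ a, φ (parent a) = parent (φ a)) ∧ (∀ a, colour (φ a) = colour a)

/-- Distance in the rooted tree from `a` down to its ancestor `b` (number of parent steps). -/
noncomputable def treeDist {A : Type} (parent : A → A) (a b : A) : ℕ :=
  sInf { n : ℕ | parent^[n] a = b }

/-- `z` is the least common ancestor of `x` and `y`. -/
def IsLCA {A : Type} (parent : A → A) (z x y : A) : Prop :=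
  Anc parent z x ∧ Anc parent z y ∧
    ∀ w, Anc parent w x → Anc parent w y → Anc parent w z

section Aux

variable {A : Type} {parent : A → A} {root : A} {colour : A → ℕ}

lemma aut_iter {φ : A ≃ A} (h : IsTreeAut parent root colour φ) (n : ℕ) (a : A) :
    φ (parent^[n] a) = parent^[n] (φ a) := by
  induction n generalizing a with
  | zero => rfl
  | succ n ih =>
    rw [Function.iterate_succ_apply, Function.iterate_succ_apply, ih, h.2.1]

lemma aut_symm {φ : A ≃ A} (h : IsTreeAut parent root colour φ) :
    IsTreeAut parent root colour φ.symm := by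
  refine ⟨?_, ?_, ?_⟩
  · apply φ.injective
    rw [Equiv.apply_symm_apply, h.1]
  · intro a
    apply φ.injective
    rw [Equiv.apply_symm_apply, h.2.1, Equiv.apply_symm_apply]
  · intro a
    conv_rhs => rw [← φ.apply_symm_apply a, h.2.2]

lemma aut_trans {φ ψ : A ≃ A} (h1 : IsTreeAut parent root colour φ)
    (h2 : IsTreeAut parent root colour ψ) :
    IsTreeAut parent root colour (φ.trans ψ) := by
  refine ⟨?_, ?_, ?_⟩
  · simp only [Equiv.trans_apply, h1.1, h2.1]
  · intro a; simp only [Equiv.trans_apply, h1.2.1, h2.2.1]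
  · intro a; simp only [Equiv.trans_apply, h1.2.2, h2.2.2]

lemma root_iter (hroot : parent root = root) : ∀ n, parent^[n] root = root := by
  intro n
  induction n with
  | zero => rfl
  | succ n ih => rw [Function.iterate_succ_apply', ih, hroot]

lemma cycle_root (hroot : parent root = root) (hwf : ∀ a, ∃ n : ℕ, parent^[n] a = root)
    {z : A} {k : ℕ} (h : parent^[k + 1] z = z) : z = root := by
  obtain ⟨N, hN⟩ := hwf z
  have hper : ∀ m, parent^[(k + 1) * m] z = z := by
    intro m
    induction m with
    | zero => rfl
    | succ m ih =>
      rw [Nat.mul_succ, Function.iterate_add_apply, h, ih]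
  have h1 := hper N
  have h2 : parent^[(k + 1) * N] z = root := by
    have : (k + 1) * N = k * N + N := by ring
    rw [this, Function.iterate_add_apply, hN, root_iter hroot]
  rw [h1] at h2
  exact h2

lemma not_anc_child (hroot : parent root = root) (hwf : ∀ a, ∃ n : ℕ, parent^[n] a = root)
    {c z : A} (hc : parent c = z) (hne : c ≠ z) : ¬ Anc parent c z := by
  rintro ⟨k, hk⟩
  have hcyc : parent^[k + 1] z = z := by
    rw [Function.iterate_succ_apply', hk, hc]
  have hz : z = root := cycle_root hroot hwf hcyc
  apply hne
  rw [hz] at hk ⊢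
  rw [← hk, root_iter hroot]

lemma disjoint_aux (hroot : parent root = root) (hwf : ∀ a, ∃ n : ℕ, parent^[n] a = root)
    {c e z : A} (hc : parent c = z) (he : parent e = z) (hene : e ≠ z) (hce : c ≠ e)
    {m : ℕ} (h : parent^[m] c = e) : False := by
  match m with
  | 0 => exact hce h
  | j + 1 =>
    have hj : parent^[j] z = e := by
      rw [← hc, ← Function.iterate_succ_apply]
      exact h
    exact not_anc_child hroot hwf he hene ⟨j, hj⟩

lemma disjoint_subtrees (hroot : parent root = root)
    (hwf : ∀ a, ∃ n : ℕ, parent^[n] a = root)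
    {c e z a : A} (hc : parent c = z) (hcne : c ≠ z)
    (he : parent e = z) (hene : e ≠ z) (hce : c ≠ e)
    (ha : Anc parent c a) (hb : Anc parent e a) : False := by
  obtain ⟨m, hm⟩ := ha
  obtain ⟨m', hm'⟩ := hb
  rcases le_total m m' with hle | hle
  · have : parent^[m' - m] c = e := by
      rw [← hm, ← Function.iterate_add_apply, Nat.sub_add_cancel hle, hm']
    exact disjoint_aux hroot hwf hc he hene hce this
  · have : parent^[m - m'] e = c := by
      rw [← hm', ← Function.iterate_add_apply, Nat.sub_add_cancel hle, hm]
    exact disjoint_aux hroot hwf he hc hcne (Ne.symm hce) this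

lemma anc_of_anc_parent {c a : A} (h : Anc parent c (parent a)) : Anc parent c a := by
  obtain ⟨n, hn⟩ := h
  exact ⟨n + 1, by rw [Function.iterate_succ_apply]; exact hn⟩

end Aux

/-- Let `T` be a finite coloured rooted tree, let `x₁, x₂` lie in a common vertex
automorphism orbit and likewise `y₁, y₂`, and let `zᵢ` be the least common ancestor of
`xᵢ` and `yᵢ`. If `dist(x₁,z₁) = dist(x₂,z₂)` and `dist(y₁,z₁) = dist(y₂,z₂)`, then some
colour-preserving automorphism of `T` maps the pair `(x₁,y₁)` onto `(x₂,y₂)`. -/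
theorem stmt_18 {A : Type} [Fintype A] (parent : A → A) (root : A) (colour : A → ℕ)
    (hroot : parent root = root) (hwf : ∀ a, ∃ n : ℕ, parent^[n] a = root)
    (x₁ x₂ y₁ y₂ z₁ z₂ : A)
    (hx : ∃ φ : A ≃ A, IsTreeAut parent root colour φ ∧ φ x₁ = x₂)
    (hy : ∃ φ : A ≃ A, IsTreeAut parent root colour φ ∧ φ y₁ = y₂)
    (hz₁ : IsLCA parent z₁ x₁ y₁) (hz₂ : IsLCA parent z₂ x₂ y₂)
    (hdx : treeDist parent x₁ z₁ = treeDist parent x₂ z₂)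
    (hdy : treeDist parent y₁ z₁ = treeDist parent y₂ z₂) :
    ∃ φ : A ≃ A, IsTreeAut parent root colour φ ∧ φ x₁ = x₂ ∧ φ y₁ = y₂ := by
  classical
  obtain ⟨φ, hφ, hφx⟩ := hx
  obtain ⟨ψ, hψ, hψy⟩ := hy
  have hdx1 : parent^[treeDist parent x₁ z₁] x₁ = z₁ := Nat.sInf_mem hz₁.1
  have hdx2 : parent^[treeDist parent x₂ z₂] x₂ = z₂ := Nat.sInf_mem hz₂.1
  have hdy1 : parent^[treeDist parent y₁ z₁] y₁ = z₁ := Nat.sInf_mem hz₁.2.1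
  have hdy2 : parent^[treeDist parent y₂ z₂] y₂ = z₂ := Nat.sInf_mem hz₂.2.1
  have hφz : φ z₁ = z₂ := by
    rw [← hdx1, aut_iter hφ, hφx, hdx, hdx2]
  have hψz : ψ z₁ = z₂ := by
    rw [← hdy1, aut_iter hψ, hψy, hdy, hdy2]
  cases hdxe : treeDist parent x₁ z₁ with
  | zero =>
    have hx1 : x₁ = z₁ := by rw [hdxe] at hdx1; exact hdx1
    have hx2 : x₂ = z₂ := by rw [← hdx, hdxe] at hdx2; exact hdx2
    exact ⟨ψ, hψ, by rw [hx1, hψz, hx2], hψy⟩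
  | succ dx' =>
    cases hdye : treeDist parent y₁ z₁ with
    | zero =>
      have hy1 : y₁ = z₁ := by rw [hdye] at hdy1; exact hdy1
      have hy2 : y₂ = z₂ := by rw [← hdy, hdye] at hdy2; exact hdy2
      exact ⟨φ, hφ, hφx, by rw [hy1, hφz, hy2]⟩
    | succ dy' =>
      -- main case
      set α : A ≃ A := ψ.symm.trans φ with hαdef
      have hα : IsTreeAut parent root colour α := aut_trans (aut_symm hψ) hφ
      have hαx : α (ψ x₁) = x₂ := by
        simp only [hαdef, Equiv.trans_apply, Equiv.symm_apply_apply, hφx]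
      -- the three children of z₂
      set c₃ := parent^[dx'] (ψ x₁) with hc₃def
      set c₂ := parent^[dx'] x₂ with hc₂def
      set e₂ := parent^[dy'] y₂ with he₂def
      have hdx1' : parent^[dx' + 1] x₁ = z₁ := by rw [← hdxe]; exact hdx1
      have hdx2' : parent^[dx' + 1] x₂ = z₂ := by rw [← hdxe, hdx]; exact hdx2
      have hdy1' : parent^[dy' + 1] y₁ = z₁ := by rw [← hdye]; exact hdy1
      have hdy2' : parent^[dy' + 1] y₂ = z₂ := by rw [← hdye, hdy]; exact hdy2
      have hpc3 : parent c₃ = z₂ := by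
        have h1 : parent^[dx' + 1] (ψ x₁) = z₂ := by
          rw [← aut_iter hψ, hdx1', hψz]
        rw [Function.iterate_succ_apply'] at h1
        rw [hc₃def]
        exact h1
      have hpc2 : parent c₂ = z₂ := by
        have h1 := hdx2'
        rw [Function.iterate_succ_apply'] at h1
        rw [hc₂def]
        exact h1
      have hpe2 : parent e₂ = z₂ := by
        have h1 := hdy2'
        rw [Function.iterate_succ_apply'] at h1
        rw [he₂def]
        exact h1
      have hc3ne : c₃ ≠ z₂ := by
        intro h
        rw [hc₃def, ← aut_iter hψ, ← hψz] at h
        have : parent^[dx'] x₁ = z₁ := ψ.injective h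
        have hle := Nat.sInf_le (show dx' ∈ {n : ℕ | parent^[n] x₁ = z₁} from this)
        rw [show sInf {n : ℕ | parent^[n] x₁ = z₁} = treeDist parent x₁ z₁ from rfl,
          hdxe] at hle
        omega
      have hc2ne : c₂ ≠ z₂ := by
        intro h
        have hle := Nat.sInf_le (show dx' ∈ {n : ℕ | parent^[n] x₂ = z₂} from h)
        rw [show sInf {n : ℕ | parent^[n] x₂ = z₂} = treeDist parent x₂ z₂ from rfl,
          ← hdx, hdxe] at hle
        omega
      have he2ne : e₂ ≠ z₂ := by
        intro h
        have hle := Nat.sInf_le (show dy' ∈ {n : ℕ | parent^[n] y₂ = z₂} from h)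
        rw [show sInf {n : ℕ | parent^[n] y₂ = z₂} = treeDist parent y₂ z₂ from rfl,
          ← hdy, hdye] at hle
        omega
      have hαc : α c₃ = c₂ := by
        rw [hc₃def, aut_iter hα, hαx]
      have hαc' : α.symm c₂ = c₃ := by rw [← hαc, Equiv.symm_apply_apply]
      have hce2 : c₂ ≠ e₂ := by
        intro h
        have h1 : Anc parent c₂ x₂ := ⟨dx', rfl⟩
        have h2 : Anc parent c₂ y₂ := ⟨dy', h.symm⟩
        exact not_anc_child hroot hwf hpc2 hc2ne (hz₂.2.2 c₂ h1 h2)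
      have hc3e2 : c₃ ≠ e₂ := by
        intro h
        rw [hc₃def, ← aut_iter hψ] at h
        rw [he₂def, ← hψy, ← aut_iter hψ] at h
        have hw : parent^[dx'] x₁ = parent^[dy'] y₁ := ψ.injective h
        set w := parent^[dx'] x₁ with hwdef
        have hψw : ψ w = c₃ := by
          rw [hwdef, aut_iter hψ, hc₃def]
        have hpw : parent w = z₁ := by
          apply ψ.injective
          rw [hψ.2.1, hψz, hψw, hpc3]
        have hwne : w ≠ z₁ := by
          intro hh
          apply hc3ne
          rw [hc₃def, ← aut_iter hψ, ← hwdef, hh, hψz]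
        have h1 : Anc parent w x₁ := ⟨dx', rfl⟩
        have h2 : Anc parent w y₁ := ⟨dy', hw.symm⟩
        exact not_anc_child hroot hwf hpw hwne (hz₁.2.2 w h1 h2)
      -- maps between subtrees
      have hmap3 : ∀ a, Anc parent c₃ a → Anc parent c₂ (α a) := by
        rintro a ⟨n, hn⟩
        exact ⟨n, by rw [← aut_iter hα, hn, hαc]⟩
      have hmap2 : ∀ a, Anc parent c₂ a → Anc parent c₃ (α.symm a) := by
        rintro a ⟨n, hn⟩
        exact ⟨n, by rw [← aut_iter (aut_symm hα), hn, hαc']⟩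
      have hdisj : c₃ ≠ c₂ → ∀ a, Anc parent c₃ a → Anc parent c₂ a → False :=
        fun h a => disjoint_subtrees hroot hwf hpc3 hc3ne hpc2 hc2ne h
      -- the swap automorphism ρ given by f / g
      set f : A → A := fun a =>
        if Anc parent c₃ a then α a else if Anc parent c₂ a then α.symm a else a with hfdef
      set g : A → A := fun a =>
        if Anc parent c₂ a then α.symm a else if Anc parent c₃ a then α a else a with hgdef
      have hleft : ∀ a, g (f a) = a := by
        intro a
        by_cases h3 : Anc parent c₃ a
        · have h2 : Anc parent c₂ (α a) := hmap3 a h3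
          simp only [hfdef, hgdef, if_pos h3, if_pos h2, Equiv.symm_apply_apply]
        · by_cases h2 : Anc parent c₂ a
          · have hcc : c₃ ≠ c₂ := by
              intro h; rw [h] at h3; exact h3 h2
            have h3' : Anc parent c₃ (α.symm a) := hmap2 a h2
            have h2' : ¬ Anc parent c₂ (α.symm a) := fun hh => hdisj hcc _ h3' hh
            simp only [hfdef, hgdef, if_neg h3, if_pos h2, if_neg h2', if_pos h3',
              Equiv.apply_symm_apply]
          · simp only [hfdef, hgdef, if_neg h3, if_neg h2]
      have hright : ∀ a, f (g a) = a := by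
        intro a
        by_cases h2 : Anc parent c₂ a
        · have h3 : Anc parent c₃ (α.symm a) := hmap2 a h2
          simp only [hfdef, hgdef, if_pos h2, if_pos h3, Equiv.apply_symm_apply]
        · by_cases h3 : Anc parent c₃ a
          · have hcc : c₃ ≠ c₂ := by
              intro h; rw [h] at h3; exact h2 h3
            have h2' : Anc parent c₂ (α a) := hmap3 a h3
            have h3' : ¬ Anc parent c₃ (α a) := fun hh => hdisj hcc _ hh h2'
            simp only [hfdef, hgdef, if_neg h2, if_pos h3, if_neg h3', if_pos h2',
              Equiv.symm_apply_apply]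
          · simp only [hfdef, hgdef, if_neg h2, if_neg h3]
      set ρ : A ≃ A := ⟨f, g, hleft, hright⟩ with hρdef
      have hz2not3 : ¬ Anc parent c₃ z₂ := not_anc_child hroot hwf hpc3 hc3ne
      have hz2not2 : ¬ Anc parent c₂ z₂ := not_anc_child hroot hwf hpc2 hc2ne
      have hfz2 : f z₂ = z₂ := by simp only [hfdef, if_neg hz2not3, if_neg hz2not2]
      have hρcomm : ∀ a, f (parent a) = parent (f a) := by
        intro a
        by_cases h3 : Anc parent c₃ a
        · obtain ⟨n, hn⟩ := h3
          cases n with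
          | zero =>
            -- a = c₃
            have ha : a = c₃ := hn
            rw [ha, hpc3, hfz2]
            have : f c₃ = c₂ := by
              simp only [hfdef]
              have hcc : Anc parent c₃ c₃ := ⟨0, rfl⟩
              rw [if_pos hcc, hαc]
            rw [this, hpc2]
          | succ n =>
            have hpa3 : Anc parent c₃ (parent a) :=
              ⟨n, by rw [← Function.iterate_succ_apply]; exact hn⟩
            simp only [hfdef]
            have haa : Anc parent c₃ a := ⟨n + 1, hn⟩
            rw [if_pos hpa3, if_pos haa, hα.2.1]
        · by_cases h2 : Anc parent c₂ a
          · obtain ⟨n, hn⟩ := h2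
            cases n with
            | zero =>
              have ha : a = c₂ := hn
              rw [ha, hpc2, hfz2]
              have : f c₂ = c₃ := by
                have h3' : ¬ Anc parent c₃ c₂ := by
                  rw [← ha]; exact h3
                simp only [hfdef]
                have hcc : Anc parent c₂ c₂ := ⟨0, rfl⟩
                rw [if_neg h3', if_pos hcc, hαc']
              rw [this, hpc3]
            | succ n =>
              have hpa2 : Anc parent c₂ (parent a) :=
                ⟨n, by rw [← Function.iterate_succ_apply]; exact hn⟩
              have hpa3 : ¬ Anc parent c₃ (parent a) :=
                fun hh => h3 (anc_of_anc_parent hh)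
              simp only [hfdef]
              have haa : Anc parent c₂ a := ⟨n + 1, hn⟩
              rw [if_neg hpa3, if_pos hpa2, if_neg h3, if_pos haa, (aut_symm hα).2.1]
          · have hpa3 : ¬ Anc parent c₃ (parent a) :=
              fun hh => h3 (anc_of_anc_parent hh)
            have hpa2 : ¬ Anc parent c₂ (parent a) :=
              fun hh => h2 (anc_of_anc_parent hh)
            simp only [hfdef, if_neg hpa3, if_neg hpa2, if_neg h3, if_neg h2]
      have hrootne3 : ¬ Anc parent c₃ root := by
        rintro ⟨n, hn⟩
        rw [root_iter hroot] at hn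
        have h1 : c₃ = root := hn.symm
        have h2 : z₂ = root := by rw [← hpc3, h1, hroot]
        exact hc3ne (h1.trans h2.symm)
      have hrootne2 : ¬ Anc parent c₂ root := by
        rintro ⟨n, hn⟩
        rw [root_iter hroot] at hn
        have h1 : c₂ = root := hn.symm
        have h2 : z₂ = root := by rw [← hpc2, h1, hroot]
        exact hc2ne (h1.trans h2.symm)
      have hρaut : IsTreeAut parent root colour ρ := by
        refine ⟨?_, hρcomm, ?_⟩
        · show f root = root
          simp only [hfdef, if_neg hrootne3, if_neg hrootne2]
        · intro a
          show colour (f a) = colour a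
          by_cases h3 : Anc parent c₃ a
          · simp only [hfdef, if_pos h3, hα.2.2]
          · by_cases h2 : Anc parent c₂ a
            · simp only [hfdef, if_neg h3, if_pos h2, (aut_symm hα).2.2]
            · simp only [hfdef, if_neg h3, if_neg h2]
      refine ⟨ψ.trans ρ, aut_trans hψ hρaut, ?_, ?_⟩
      · show f (ψ x₁) = x₂
        have h3 : Anc parent c₃ (ψ x₁) := ⟨dx', rfl⟩
        simp only [hfdef, if_pos h3, hαx]
      · show f (ψ y₁) = y₂
        rw [hψy]
        have hy3 : ¬ Anc parent c₃ y₂ := fun hh =>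
          disjoint_subtrees hroot hwf hpc3 hc3ne hpe2 he2ne hc3e2 hh ⟨dy', rfl⟩
        have hy2' : ¬ Anc parent c₂ y₂ := fun hh =>
          disjoint_subtrees hroot hwf hpc2 hc2ne hpe2 he2ne hce2 hh ⟨dy', rfl⟩
        simp only [hfdef, if_neg hy3, if_neg hy2']
end
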